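/- Let G be a graph with 2n non-isolated vertices, minimum vertex cover size n, satisfying (∗). Let A ⊆ [n] be an antichain in the semidirected graph 𝔡_G (no directed path between any two distinct elements of A) such that Ω_A = {j : j is reachable by a directed path from some element of A, or j ∈ A} contains no undirected edge of 𝔡_G. Then {x_i y_i : i ∈ A} is a set of pairwise 3-disjoint edges of G; in particular a(G) ≥ |A|. -/
import Mathlib


open Relation

/-- `C` is a vertex cover of `G`. -/
def IsVC {V : Type*} (G : SimpleGraph V) (C : Set V) : Prop :=
  ∀ ⦃u v : V⦄, G.Adj u v → u ∈ C ∨ v ∈ C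

/-- `C` is a minimal vertex cover of `G`. -/
def IsMinVC {V : Type*} (G : SimpleGraph V) (C : Set V) : Prop :=
  IsVC G C ∧ ∀ D : Set V, IsVC G D → D ⊆ C → D = C

/-- `S` is an independent set of `G`. -/
def IsIndep {V : Type*} (G : SimpleGraph V) (S : Set V) : Prop :=
  ∀ u ∈ S, ∀ v ∈ S, ¬ G.Adj u v

/-- `S` is a maximal independent set of `G`. -/
def IsMaxIndep {V : Type*} (G : SimpleGraph V) (S : Set V) : Prop :=
  IsIndep G S ∧ ∀ T : Set V, IsIndep G T → S ⊆ T → T = S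

/-- `G` has no isolated vertices. -/
def NoIsolated {V : Type*} (G : SimpleGraph V) : Prop := ∀ v, ∃ w, G.Adj v w

/-- The vertex set `{x_1,...,x_n} ∪ {y_1,...,y_n}`: `xv i = Sum.inl i`, `yv i = Sum.inr i`. -/
abbrev Vtx (n : ℕ) := Fin n ⊕ Fin n

def xv {n : ℕ} (i : Fin n) : Vtx n := Sum.inl i
def yv {n : ℕ} (i : Fin n) : Vtx n := Sum.inr i

/-- Condition (∗): X is a minimal vertex cover, Y is a maximal independent set,
and `x_i y_i` is an edge for every `i`. -/
def StarCond {n : ℕ} (G : SimpleGraph (Vtx n)) : Prop :=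
  IsMinVC G (Set.range xv) ∧ IsMaxIndep G (Set.range yv) ∧ ∀ i, G.Adj (xv i) (yv i)

/-- Condition (∗∗): `x_i y_j ∈ E(G)` implies `i ≤ j`. -/
def StarStarCond {n : ℕ} (G : SimpleGraph (Vtx n)) : Prop :=
  ∀ i j : Fin n, G.Adj (xv i) (yv j) → i ≤ j

/-- Condition (i): for distinct `i,j,k` and `z_i ∈ {x_i,y_i}`, if `z_i x_j` and `y_j x_k`
are edges then so is `z_i x_k`. -/
def CondI {n : ℕ} (G : SimpleGraph (Vtx n)) : Prop :=
  ∀ i j k : Fin n, i ≠ j → j ≠ k → i ≠ k →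
    ∀ z ∈ ({xv i, yv i} : Set (Vtx n)),
      G.Adj z (xv j) → G.Adj (yv j) (xv k) → G.Adj z (xv k)

/-- Condition (ii): `x_i y_j ∈ E(G)` implies `x_i x_j ∉ E(G)`. -/
def CondII {n : ℕ} (G : SimpleGraph (Vtx n)) : Prop :=
  ∀ i j : Fin n, G.Adj (xv i) (yv j) → ¬ G.Adj (xv i) (xv j)

/-- The minimum vertex cover size of `G` (the height of the edge ideal) is at least `n`. -/
def HeightN {n : ℕ} (G : SimpleGraph (Vtx n)) : Prop :=
  ∀ C : Finset (Vtx n), IsVC G ↑C → n ≤ C.card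

/-- Directed edge `i → j` of the semidirected graph `𝔡_G`. -/
def dirEdge {n : ℕ} (G : SimpleGraph (Vtx n)) (i j : Fin n) : Prop :=
  i ≠ j ∧ G.Adj (xv i) (yv j)

/-- Undirected edge `ij` of the semidirected graph `𝔡_G`. -/
def undirEdge {n : ℕ} (G : SimpleGraph (Vtx n)) (i j : Fin n) : Prop :=
  G.Adj (xv i) (xv j)
/-- The edges `ab` and `cd` of `G` are 3-disjoint: the induced subgraph on the four
(distinct) vertices consists of exactly the two disjoint edges. -/
def ThreeDisjoint {V : Type*} (G : SimpleGraph V) (a b c d : V) : Prop :=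
  G.Adj a b ∧ G.Adj c d ∧ a ≠ c ∧ a ≠ d ∧ b ≠ c ∧ b ≠ d ∧
    ¬ G.Adj a c ∧ ¬ G.Adj a d ∧ ¬ G.Adj b c ∧ ¬ G.Adj b d

/-- `B` is a set of pairwise 3-disjoint edges of `G`. -/
def Is3DisjointFamily {V : Type*} (G : SimpleGraph V) (B : Finset (V × V)) : Prop :=
  (∀ e ∈ B, G.Adj e.1 e.2) ∧
    ∀ e ∈ B, ∀ f ∈ B, e ≠ f → ThreeDisjoint G e.1 e.2 f.1 f.2

/-- `a(G)`: the maximum size of a set of pairwise 3-disjoint edges of `G`. -/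
noncomputable def aNum {V : Type*} (G : SimpleGraph V) : ℕ :=
  sSup {k | ∃ B : Finset (V × V), Is3DisjointFamily G B ∧ B.card = k}

/-- `Ω_A`: the set of indices reachable in `𝔡_G` by a directed path from `A` (or in `A`). -/
def Omega {n : ℕ} (G : SimpleGraph (Vtx n)) (A : Finset (Fin n)) : Set (Fin n) :=
  {j | ∃ i ∈ A, ReflTransGen (dirEdge G) i j}

/-- `A` is an antichain of `𝔡_G`: no directed path between distinct members. -/
def AntichainD {n : ℕ} (G : SimpleGraph (Vtx n)) (A : Finset (Fin n)) : Prop :=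
  ∀ i ∈ A, ∀ j ∈ A, i ≠ j → ¬ TransGen (dirEdge G) i j

/-- Lemma 4.5. Let `G` satisfy (∗) with `2n` non-isolated vertices and
minimum vertex cover size `n`. If `A` is an antichain of `𝔡_G` such that `Ω_A` contains no
undirected edge of `𝔡_G`, then `{x_i y_i : i ∈ A}` is a set of pairwise 3-disjoint edges of
`G`; in particular `a(G) ≥ |A|`. -/
theorem antichain_gives_3disjoint {n : ℕ} (G : SimpleGraph (Vtx n))
    (hiso : NoIsolated G) (hht : HeightN G) (hstar : StarCond G)
    (A : Finset (Fin n)) (hA : AntichainD G A)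
    (hΩ : ∀ i ∈ Omega G A, ∀ j ∈ Omega G A, ¬ undirEdge G i j) :
    (∀ i ∈ A, ∀ j ∈ A, i ≠ j → ThreeDisjoint G (xv i) (yv i) (xv j) (yv j)) ∧
    A.card ≤ aNum G := by
  obtain ⟨hX, hY, hxy⟩ := hstar
  have key : ∀ i ∈ A, ∀ j ∈ A, i ≠ j → ThreeDisjoint G (xv i) (yv i) (xv j) (yv j) := by
    intro i hi j hj hij
    have hiΩ : i ∈ Omega G A := ⟨i, hi, ReflTransGen.refl⟩
    have hjΩ : j ∈ Omega G A := ⟨j, hj, ReflTransGen.refl⟩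
    refine ⟨hxy i, hxy j, ?_, ?_, ?_, ?_, ?_, ?_, ?_, ?_⟩
    · simp [xv]; exact fun h => hij h
    · simp [xv, yv]
    · simp [xv, yv]
    · simp [yv]; exact fun h => hij h
    · exact hΩ i hiΩ j hjΩ
    · intro h
      exact hA i hi j hj hij (TransGen.single ⟨hij, h⟩)
    · intro h
      exact hA j hj i hi hij.symm (TransGen.single ⟨hij.symm, h.symm⟩)
    · exact hY.1 (yv i) ⟨i, rfl⟩ (yv j) ⟨j, rfl⟩
  refine ⟨key, ?_⟩
  have hinj : Function.Injective (fun i : Fin n => ((xv i, yv i) : Vtx n × Vtx n)) := by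
    intro a b h
    simpa [xv, yv, Prod.ext_iff, Sum.inl.injEq] using h
  set B : Finset (Vtx n × Vtx n) := A.image (fun i => (xv i, yv i)) with hB
  have hcard : B.card = A.card := Finset.card_image_of_injective _ hinj
  have hfam : Is3DisjointFamily G B := by
    constructor
    · intro e he
      obtain ⟨i, _, rfl⟩ := Finset.mem_image.mp he
      exact hxy i
    · intro e he f hf hef
      obtain ⟨i, hi, rfl⟩ := Finset.mem_image.mp he
      obtain ⟨j, hj, rfl⟩ := Finset.mem_image.mp hf
      exact key i hi j hj (fun h => hef (by rw [h]))
  have hbdd : BddAbove {k | ∃ B : Finset (Vtx n × Vtx n), Is3DisjointFamily G B ∧ B.card = k} := by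
    refine ⟨Fintype.card (Vtx n × Vtx n), ?_⟩
    rintro k ⟨C, _, rfl⟩
    exact Finset.card_le_univ C |>.trans_eq (Finset.card_univ)
  calc A.card = B.card := hcard.symm
    _ ≤ aNum G := le_csSup hbdd ⟨B, hfam, rfl⟩
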